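/- Let A = {a,b,c} and R = {ac → ca, bc → cb, cab → cbb}, and let N = {a,b}* ∪ {cⁱ bʲ aᵏ : i ≥ 1, j,k ≥ 0}. Then N is a set of unique normal forms for the monoid presented by ⟨A | R⟩: for every word w over A there exists exactly one word z ∈ N with w ↔*_R z. -/

import Mathlib

/-- The three-letter alphabet `{a, b, c}`. -/
inductive ABC : Type
  | a : ABC
  | b : ABC
  | c : ABC

open ABC

/-- Single-step reduction of a string rewriting system `R`:
`u →_R v` iff `u = xℓy` and `v = xry` for some rule `(ℓ, r) ∈ R`. -/
def Step {α : Type*} (R : Set (List α × List α)) (u v : List α) : Prop :=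
  ∃ x y l r, (l, r) ∈ R ∧ u = x ++ l ++ y ∧ v = x ++ r ++ y

/-- The rules `ac → ca`, `bc → cb`, `cab → cbb` of Example 3.4. -/
def Rp : Set (List ABC × List ABC) :=
  {([a,c], [c,a]), ([b,c], [c,b]), ([c,a,b], [c,b,b])}

/-- The set of normal forms `N = {a,b}* ∪ {cⁱbʲaᵏ : i ≥ 1, j,k ≥ 0}`. -/
def NF : Set (List ABC) :=
  {w | c ∉ w} ∪
  {w | ∃ i j k : ℕ, 1 ≤ i ∧
        w = List.replicate i c ++ List.replicate j b ++ List.replicate k a}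

deriving instance DecidableEq for ABC

/-- length of the leading run of `a`s -/
def leadA : List ABC → ℕ
  | [] => 0
  | .a :: t => leadA t + 1
  | .b :: _ => 0
  | .c :: _ => 0

/-- number of `c`s -/
def nc : List ABC → ℕ
  | [] => 0
  | .c :: t => nc t + 1
  | _ :: t => nc t

/-- projection deleting all `c`s -/
def pr : List ABC → List ABC
  | [] => []
  | .c :: t => pr t
  | x :: t => x :: pr t

def taRun (u : List ABC) : ℕ := leadA u.reverse

def normAB (u : List ABC) : List ABC :=
  List.replicate (u.length - taRun u) b ++ List.replicate (taRun u) a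

def nf (w : List ABC) : List ABC :=
  if c ∈ w then List.replicate (nc w) c ++ normAB (pr w) else w

section lemmas

local notation "E" => Relation.EqvGen (Step Rp)

lemma step_context {u v x y : List ABC} (h : Step Rp u v) :
    Step Rp (x ++ u ++ y) (x ++ v ++ y) := by
  obtain ⟨p, q, l, r, hR, hu, hv⟩ := h
  exact ⟨x ++ p, q ++ y, l, r, hR, by simp [hu], by simp [hv]⟩

lemma eqv_context {u v : List ABC} (x y : List ABC) (h : E u v) :
    E (x ++ u ++ y) (x ++ v ++ y) := by
  induction h with
  | rel _ _ h => exact .rel _ _ (step_context h)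
  | refl _ => exact .refl _
  | symm _ _ _ ih => exact .symm _ _ ih
  | trans _ _ _ _ _ ih1 ih2 => exact .trans _ _ _ ih1 ih2

lemma eqv_cons (x : ABC) {u v : List ABC} (h : E u v) : E (x :: u) (x :: v) := by
  simpa using eqv_context [x] [] h

lemma step_ac (t : List ABC) : Step Rp (a :: c :: t) (c :: a :: t) :=
  ⟨[], t, [a,c], [c,a], by simp [Rp], by simp, by simp⟩

lemma step_bc (t : List ABC) : Step Rp (b :: c :: t) (c :: b :: t) :=
  ⟨[], t, [b,c], [c,b], by simp [Rp], by simp, by simp⟩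

lemma step_cab (t : List ABC) : Step Rp (c :: a :: b :: t) (c :: b :: b :: t) :=
  ⟨[], t, [c,a,b], [c,b,b], by simp [Rp], by simp, by simp⟩

/-- move a non-`c` letter right across a block of `c`s -/
lemma move (x : ABC) (hx : x = a ∨ x = b) (m : ℕ) (u : List ABC) :
    E (x :: (List.replicate m c ++ u)) (List.replicate m c ++ x :: u) := by
  induction m generalizing u with
  | zero => exact .refl _
  | succ m ih =>
      have h1 : Step Rp (x :: c :: (List.replicate m c ++ u))
          (c :: x :: (List.replicate m c ++ u)) := by
        rcases hx with rfl | rfl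
        · exact step_ac _
        · exact step_bc _
      have h2 : E (c :: (x :: (List.replicate m c ++ u)))
          (c :: (List.replicate m c ++ x :: u)) := eqv_cons c (ih u)
      refine Relation.EqvGen.trans _ (c :: x :: (List.replicate m c ++ u)) _ ?_ ?_
      · simpa [List.replicate_succ] using Relation.EqvGen.rel _ _ h1
      · simpa [List.replicate_succ] using h2

lemma leadA_le (s : List ABC) : leadA s ≤ s.length := by
  induction s with
  | nil => simp [leadA]
  | cons x t ih => cases x <;> simp [leadA] <;> omega

lemma leadA_snoc_b (s : List ABC) : leadA (s ++ [b]) = leadA s := by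
  induction s with
  | nil => simp [leadA]
  | cons x t ih => cases x <;> simp [leadA, ih]

lemma leadA_append_allA (s t : List ABC) (h : ∀ x ∈ s, x = a) :
    leadA (s ++ t) = s.length + leadA t := by
  induction s with
  | nil => simp
  | cons x s ih =>
      have hx : x = a := h x (by simp)
      subst hx
      have ih' := ih (fun y hy => h y (by simp [hy]))
      have hl : leadA (a :: (s ++ t)) = leadA (s ++ t) + 1 := rfl
      rw [List.cons_append, hl, ih', List.length_cons]
      omega

lemma leadA_append_of_mem_b {s : List ABC} (t : List ABC) (h : b ∈ s) :
    leadA (s ++ t) = leadA s := by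
  induction s with
  | nil => simp at h
  | cons x s ih =>
      cases x <;> simp_all [leadA]

lemma leadA_lt_of_mem_b {s : List ABC} (h : b ∈ s) : leadA s < s.length := by
  induction s with
  | nil => simp at h
  | cons x s ih =>
      cases x <;> simp_all [leadA] <;> omega

lemma leadA_b_indep (s t t' : List ABC) :
    leadA (s ++ b :: t) = leadA (s ++ b :: t') := by
  induction s with
  | nil => simp [leadA]
  | cons x s ih => cases x <;> simp [leadA, ih]

lemma leadA_replicate_b (n : ℕ) : leadA (List.replicate n b) = 0 := by
  cases n <;> simp [List.replicate_succ, leadA]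

lemma taRun_le (u : List ABC) : taRun u ≤ u.length := by
  simpa [taRun] using leadA_le u.reverse

lemma taRun_cons_b (t : List ABC) : taRun (b :: t) = taRun t := by
  simp [taRun, leadA_snoc_b]

lemma taRun_cons_a_of_b {t : List ABC} (h : b ∈ t) : taRun (a :: t) = taRun t := by
  have hb : b ∈ t.reverse := by simpa using h
  simp [taRun, leadA_append_of_mem_b [a] hb]

lemma taRun_lt_of_mem_b {t : List ABC} (h : b ∈ t) : taRun t < t.length := by
  have hb : b ∈ t.reverse := by simpa using h
  simpa [taRun] using leadA_lt_of_mem_b hb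

lemma normAB_cons_b (t : List ABC) : normAB (b :: t) = b :: normAB t := by
  have h := taRun_le t
  simp only [normAB, taRun_cons_b, List.length_cons]
  rw [show t.length + 1 - taRun t = (t.length - taRun t) + 1 by omega,
    List.replicate_succ]
  simp

lemma allA_eq_replicate {u : List ABC} (h : ∀ x ∈ u, x = a) :
    u = List.replicate u.length a := by
  induction u with
  | nil => simp
  | cons x t ih =>
      have hx : x = a := h x (by simp)
      subst hx
      have ih' := ih (fun y hy => h y (by simp [hy]))
      rw [List.length_cons, List.replicate_succ, ← ih']

lemma normAB_allA {u : List ABC} (h : ∀ x ∈ u, x = a) : normAB u = u := by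
  have hrev : ∀ x ∈ u.reverse, x = a := by simpa using h
  have ht : taRun u = u.length := by
    simpa [taRun, leadA] using leadA_append_allA u.reverse [] hrev
  rw [normAB, ht]
  simp [← allA_eq_replicate h]

lemma normAB_cons_a_of_b {t : List ABC} (h : b ∈ t) :
    normAB (a :: t) = b :: normAB t := by
  have h1 := taRun_lt_of_mem_b h
  simp only [normAB, taRun_cons_a_of_b h, List.length_cons]
  rw [show t.length + 1 - taRun t = (t.length - taRun t) + 1 by omega,
    List.replicate_succ]
  simp

/-- normalization behind a `c` -/
lemma normalizeC (u : List ABC) (hc : c ∉ u) : E (c :: u) (c :: normAB u) := by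
  induction u with
  | nil => exact .refl _
  | cons x t ih =>
      have hct : c ∉ t := fun h => hc (by simp [h])
      cases x with
      | c => exact absurd (by simp) hc
      | b =>
          have h1 : E (c :: b :: t) (b :: c :: t) := .symm _ _ (.rel _ _ (step_bc t))
          have h2 : E (b :: c :: t) (b :: c :: normAB t) := eqv_cons b (ih hct)
          have h3 : E (b :: c :: normAB t) (c :: b :: normAB t) := .rel _ _ (step_bc _)
          rw [normAB_cons_b]
          exact .trans _ _ _ (.trans _ _ _ h1 h2) h3
      | a =>
          by_cases hb : b ∈ t
          · have h1 : E (c :: a :: t) (a :: c :: t) := .symm _ _ (.rel _ _ (step_ac t))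
            have h2 : E (a :: c :: t) (a :: c :: normAB t) := eqv_cons a (ih hct)
            have h3 : E (a :: c :: normAB t) (c :: a :: normAB t) := .rel _ _ (step_ac _)
            have hlt := taRun_lt_of_mem_b hb
            have hrep : normAB t = b :: (List.replicate (t.length - taRun t - 1) b ++
                List.replicate (taRun t) a) := by
              rw [normAB, show t.length - taRun t = (t.length - taRun t - 1) + 1 by omega,
                List.replicate_succ]
              simp
            have h4 : E (c :: a :: normAB t) (c :: normAB (a :: t)) := by
              rw [hrep, normAB_cons_a_of_b hb, hrep]
              exact .rel _ _ (step_cab _)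
            exact .trans _ _ _ (.trans _ _ _ (.trans _ _ _ h1 h2) h3) h4
          · have hall : ∀ x ∈ a :: t, x = a := by
              intro x hx
              rcases List.mem_cons.mp hx with rfl | hx
              · rfl
              · cases x with
                | a => rfl
                | b => exact absurd hx hb
                | c => exact absurd (by simp [hx]) hc
            rw [normAB_allA hall]
            exact .refl _

lemma c_not_mem_pr (w : List ABC) : c ∉ pr w := by
  induction w with
  | nil => simp [pr]
  | cons x t ih => cases x <;> simp [pr, ih]

/-- pull the `c`s to the front -/
lemma pull (w : List ABC) : E w (List.replicate (nc w) c ++ pr w) := by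
  induction w with
  | nil => exact .refl _
  | cons x t ih =>
      cases x with
      | c =>
          have := eqv_cons c ih
          simpa [nc, pr, List.replicate_succ] using this
      | a =>
          have h1 : E (a :: t) (a :: (List.replicate (nc t) c ++ pr t)) := eqv_cons a ih
          have h2 := move a (Or.inl rfl) (nc t) (pr t)
          simpa [nc, pr] using Relation.EqvGen.trans _ _ _ h1 h2
      | b =>
          have h1 : E (b :: t) (b :: (List.replicate (nc t) c ++ pr t)) := eqv_cons b ih
          have h2 := move b (Or.inr rfl) (nc t) (pr t)
          simpa [nc, pr] using Relation.EqvGen.trans _ _ _ h1 h2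

lemma nc_append (s t : List ABC) : nc (s ++ t) = nc s + nc t := by
  induction s with
  | nil => simp [nc]
  | cons x s ih => cases x <;> simp [nc, ih] <;> omega

lemma pr_append (s t : List ABC) : pr (s ++ t) = pr s ++ pr t := by
  induction s with
  | nil => simp [pr]
  | cons x s ih => cases x <;> simp [pr, ih]

lemma normAB_eq_of (u v : List ABC) (hl : u.length = v.length)
    (ht : taRun u = taRun v) : normAB u = normAB v := by
  rw [normAB, normAB, hl, ht]

/-- `nf` is invariant under single steps -/
lemma nf_step {u v : List ABC} (h : Step Rp u v) : nf u = nf v := by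
  obtain ⟨x, y, l, r, hR, hu, hv⟩ := h
  have hR' : (l = [a,c] ∧ r = [c,a]) ∨ (l = [b,c] ∧ r = [c,b]) ∨
      (l = [c,a,b] ∧ r = [c,b,b]) := by
    simpa [Rp, Prod.ext_iff] using hR
  subst hu hv
  rcases hR' with ⟨rfl, rfl⟩ | ⟨rfl, rfl⟩ | ⟨rfl, rfl⟩
  · have h1 : c ∈ x ++ [a,c] ++ y := by simp
    have h2 : c ∈ x ++ [c,a] ++ y := by simp
    rw [nf, nf, if_pos h1, if_pos h2]
    simp [nc_append, pr_append, nc, pr]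
  · have h1 : c ∈ x ++ [b,c] ++ y := by simp
    have h2 : c ∈ x ++ [c,b] ++ y := by simp
    rw [nf, nf, if_pos h1, if_pos h2]
    simp [nc_append, pr_append, nc, pr]
  · have h1 : c ∈ x ++ [c,a,b] ++ y := by simp
    have h2 : c ∈ x ++ [c,b,b] ++ y := by simp
    rw [nf, nf, if_pos h1, if_pos h2]
    have hnc : nc (x ++ [c,a,b] ++ y) = nc (x ++ [c,b,b] ++ y) := by
      simp [nc_append, nc]
    have hpr1 : pr (x ++ [c,a,b] ++ y) = pr x ++ [a,b] ++ pr y := by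
      simp [pr_append, pr]
    have hpr2 : pr (x ++ [c,b,b] ++ y) = pr x ++ [b,b] ++ pr y := by
      simp [pr_append, pr]
    have hta : taRun (pr x ++ [a,b] ++ pr y) = taRun (pr x ++ [b,b] ++ pr y) := by
      have e1 : (pr x ++ [a,b] ++ pr y).reverse =
          (pr y).reverse ++ b :: (a :: (pr x).reverse) := by simp
      have e2 : (pr x ++ [b,b] ++ pr y).reverse =
          (pr y).reverse ++ b :: (b :: (pr x).reverse) := by simp
      rw [taRun, taRun, e1, e2, leadA_b_indep _ _ (b :: (pr x).reverse)]
    have hnorm : normAB (pr x ++ [a,b] ++ pr y) = normAB (pr x ++ [b,b] ++ pr y) :=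
      normAB_eq_of _ _ (by simp) hta
    rw [hnc, hpr1, hpr2, hnorm]

lemma nf_eqv {u v : List ABC} (h : E u v) : nf u = nf v := by
  induction h with
  | rel _ _ h => exact nf_step h
  | refl _ => rfl
  | symm _ _ _ ih => exact ih.symm
  | trans _ _ _ _ _ ih1 ih2 => exact ih1.trans ih2

lemma nc_pos {w : List ABC} (h : c ∈ w) : 1 ≤ nc w := by
  induction w with
  | nil => simp at h
  | cons x t ih => cases x <;> simp_all [nc] <;> omega

/-- every word is equivalent to its normal form -/
lemma eqv_nf (w : List ABC) : E w (nf w) := by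
  by_cases h : c ∈ w
  · rw [nf, if_pos h]
    have h1 := pull w
    have h2 : E (List.replicate (nc w) c ++ pr w)
        (List.replicate (nc w) c ++ normAB (pr w)) := by
      have hpos := nc_pos h
      have hrep : List.replicate (nc w) c =
          List.replicate (nc w - 1) c ++ [c] := by
        rw [← List.replicate_succ']
        congr 1
        omega
      have h3 := eqv_context (List.replicate (nc w - 1) c) []
        (normalizeC (pr w) (c_not_mem_pr w))
      rw [hrep]
      simpa using h3
    exact .trans _ _ _ h1 h2
  · rw [nf, if_neg h]
    exact .refl _

lemma nc_replicate_c (n : ℕ) : nc (List.replicate n c) = n := by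
  induction n with
  | zero => simp [nc]
  | succ n ih => simp [List.replicate_succ, nc, ih]

lemma pr_replicate_c (n : ℕ) : pr (List.replicate n c) = [] := by
  induction n with
  | zero => simp [pr]
  | succ n ih => simp [List.replicate_succ, pr, ih]

lemma nc_replicate_b (n : ℕ) : nc (List.replicate n b) = 0 := by
  induction n with
  | zero => simp [nc]
  | succ n ih => simp [List.replicate_succ, nc, ih]

lemma nc_replicate_a (n : ℕ) : nc (List.replicate n a) = 0 := by
  induction n with
  | zero => simp [nc]
  | succ n ih => simp [List.replicate_succ, nc, ih]

lemma pr_replicate_b (n : ℕ) : pr (List.replicate n b) = List.replicate n b := by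
  induction n with
  | zero => simp [pr]
  | succ n ih => simp [List.replicate_succ, pr, ih]

lemma pr_replicate_a (n : ℕ) : pr (List.replicate n a) = List.replicate n a := by
  induction n with
  | zero => simp [pr]
  | succ n ih => simp [List.replicate_succ, pr, ih]

lemma normAB_canon (j k : ℕ) :
    normAB (List.replicate j b ++ List.replicate k a) =
      List.replicate j b ++ List.replicate k a := by
  have hta : taRun (List.replicate j b ++ List.replicate k a) = k := by
    rw [taRun]
    have : (List.replicate j b ++ List.replicate k a).reverse =
        List.replicate k a ++ List.replicate j b := by simp
    rw [this, leadA_append_allA _ _ (by simp), leadA_replicate_b]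
    simp
  rw [normAB, hta]
  simp

/-- `nf` fixes elements of `NF` -/
lemma nf_fix {z : List ABC} (hz : z ∈ NF) : nf z = z := by
  rcases hz with hz | ⟨i, j, k, hi, rfl⟩
  · rw [nf, if_neg hz]
  · have hc : c ∈ List.replicate i c ++ List.replicate j b ++ List.replicate k a := by
      simp
      omega
    rw [nf, if_pos hc]
    have hnc : nc (List.replicate i c ++ List.replicate j b ++ List.replicate k a) = i := by
      simp [nc_append, nc_replicate_c, nc_replicate_b, nc_replicate_a]
    have hpr : pr (List.replicate i c ++ List.replicate j b ++ List.replicate k a) =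
        List.replicate j b ++ List.replicate k a := by
      simp [pr_append, pr_replicate_c, pr_replicate_b, pr_replicate_a]
    rw [hnc, hpr, normAB_canon]
    simp

/-- `nf w` is always in `NF` -/
lemma nf_mem (w : List ABC) : nf w ∈ NF := by
  by_cases h : c ∈ w
  · right
    refine ⟨nc w, (pr w).length - taRun (pr w), taRun (pr w), nc_pos h, ?_⟩
    rw [nf, if_pos h, normAB]
    simp
  · left
    rw [nf, if_neg h]
    exact h

/-- `N` is a set of unique normal forms for the monoid presented by `⟨A | R⟩`:
every word over `A` is `↔*_R`-equivalent to exactly one word of `N`. -/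
theorem stmt_10 :
    ∀ w : List ABC, ∃! z : List ABC, z ∈ NF ∧ Relation.EqvGen (Step Rp) w z := by
  intro w
  refine ⟨nf w, ⟨nf_mem w, eqv_nf w⟩, ?_⟩
  rintro y ⟨hy, he⟩
  have h1 : nf w = nf y := nf_eqv he
  have h2 : nf y = y := nf_fix hy
  rw [← h2, ← h1]
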